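/- Let G be a group, r ∈ G, and a_1, ..., a_k pairwise commuting elements with r a_j r^{-1} = a_{j+1} for j = 1, ..., k-1 and r a_k r^{-1} = a_1. Then for any integer n, the product a_1^n a_2^n ··· a_k^n equals [A, r] · a_k^{kn} where A = a_1^{n} a_2^{2n} ··· a_{k-1}^{(k-1)n}, and consequently a_1^n a_2^n ··· a_k^n · a_k^{-kn} is a single commutator. -/

import Mathlib

open scoped commutatorElement

private lemma aux_prod_mul {G : Type*} [Group G] (a : ℕ → G) (l : List ℕ)
    (hc : ∀ i ∈ l, ∀ j ∈ l, Commute (a i) (a j)) (f g : ℕ → ℤ) :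
    (l.map fun i => a i ^ f i).prod * (l.map fun i => a i ^ g i).prod =
      (l.map fun i => a i ^ (f i + g i)).prod := by
  induction l with
  | nil => simp
  | cons i l ih =>
    have hcm : Commute ((l.map fun j => a j ^ f j).prod) (a i ^ g i) := by
      apply (Commute.list_prod_right _ _ ?_).symm
      intro x hx
      obtain ⟨j, hj, rfl⟩ := List.mem_map.mp hx
      exact ((hc i (by simp) j (by simp [hj])).zpow_zpow _ _)
    simp only [List.map_cons, List.prod_cons]
    rw [hcm.mul_mul_mul_comm, ← zpow_add,
      ih (fun i hi j hj => hc i (by simp [hi]) j (by simp [hj]))]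

private lemma aux_prod_inv {G : Type*} [Group G] (a : ℕ → G) (l : List ℕ)
    (hc : ∀ i ∈ l, ∀ j ∈ l, Commute (a i) (a j)) (f : ℕ → ℤ) :
    ((l.map fun i => a i ^ f i).prod)⁻¹ = (l.map fun i => a i ^ (-f i)).prod := by
  symm
  apply eq_inv_of_mul_eq_one_left
  rw [aux_prod_mul a l hc (fun i => -f i) f]
  simp

private lemma aux_prod_conj {G : Type*} [Group G] (a : ℕ → G) (r : G) (l : List ℕ)
    (f : ℕ → ℤ) :
    r * (l.map fun i => a i ^ f i).prod * r⁻¹ =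
      (l.map fun i => (r * a i * r⁻¹) ^ f i).prod := by
  induction l with
  | nil => simp
  | cons i l ih =>
    simp only [List.map_cons, List.prod_cons]
    have : (r * a i * r⁻¹) ^ f i = r * a i ^ f i * r⁻¹ := by
      rw [conj_zpow]
    rw [this, ← ih]
    group

theorem prod_powers_cyclic_eq_commutator_mul {G : Type*} [Group G] (k : ℕ) (hk : 1 ≤ k)
    (a : ℕ → G) (r : G)
    (hcomm : ∀ i j, i < k → j < k → a i * a j = a j * a i)
    (hconj : ∀ j, j + 1 < k → r * a j * r⁻¹ = a (j + 1))
    (hwrap : r * a (k - 1) * r⁻¹ = a 0)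
    (n : ℤ) :
    ((List.range k).map (fun i => a i ^ n)).prod =
      ⁅((List.range (k - 1)).map (fun i => a i ^ ((i + 1 : ℤ) * n))).prod, r⁆ *
        a (k - 1) ^ ((k : ℤ) * n) ∧
    ∃ u v : G,
      ((List.range k).map (fun i => a i ^ n)).prod * a (k - 1) ^ (-((k : ℤ) * n)) = ⁅u, v⁆ := by
  obtain ⟨m, rfl⟩ : ∃ m, k = m + 1 := ⟨k - 1, (Nat.succ_pred_eq_of_pos hk).symm⟩
  simp only [Nat.add_sub_cancel] at *
  set f : ℕ → ℤ := fun i => if i < m then ((i : ℤ) + 1) * n else 0 with hf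
  set g : ℕ → ℤ := fun i => if i = 0 then 0 else -((i : ℤ) * n) with hg
  set h : ℕ → ℤ := fun i => if i = m then ((m : ℤ) + 1) * n else 0 with hh
  set A : G := ((List.range m).map (fun i => a i ^ ((i + 1 : ℤ) * n))).prod with hA
  have hc : ∀ i ∈ List.range (m + 1), ∀ j ∈ List.range (m + 1), Commute (a i) (a j) := by
    intro i hi j hj
    exact hcomm i j (List.mem_range.mp hi) (List.mem_range.mp hj)
  have hcm : ∀ i ∈ List.range m, ∀ j ∈ List.range m, Commute (a i) (a j) := by
    intro i hi j hj
    exact hcomm i j (Nat.lt_succ_of_lt (List.mem_range.mp hi))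
      (Nat.lt_succ_of_lt (List.mem_range.mp hj))
  -- A as a product over range (m+1)
  have hAf : A = ((List.range (m + 1)).map fun i => a i ^ f i).prod := by
    rw [List.range_succ, List.map_append, List.prod_append]
    simp only [List.map_cons, List.map_nil, List.prod_cons, List.prod_nil]
    rw [hA]
    have : f m = 0 := by simp [hf]
    rw [this, zpow_zero, mul_one, mul_one]
    congr 1
    apply List.map_congr_left
    intro i hi
    have : f i = ((i : ℤ) + 1) * n := by simp [hf, List.mem_range.mp hi]
    rw [this]
  -- conjugate of A⁻¹ as a product over range (m+1)
  have hAg : r * A⁻¹ * r⁻¹ = ((List.range (m + 1)).map fun i => a i ^ g i).prod := by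
    rw [hA, aux_prod_inv a _ hcm, aux_prod_conj]
    rw [List.range_succ_eq_map]
    simp only [List.map_cons, List.prod_cons, List.map_map]
    have hg0 : g 0 = 0 := by simp [hg]
    rw [hg0, zpow_zero, one_mul]
    apply congrArg List.prod
    apply List.map_congr_left
    intro i hi
    have hi' : i < m := List.mem_range.mp hi
    have h1 : r * a i * r⁻¹ = a (i + 1) := hconj i (by omega)
    simp only [Function.comp_apply, h1]
    have h2 : g i.succ = -(((i : ℤ) + 1) * n) := by
      simp only [hg]
      rw [if_neg (Nat.succ_ne_zero i)]
      push_cast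
      ring
    rw [h2]
  -- a m ^ ((m+1) n) as a product over range (m+1)
  have hAh : a m ^ (((m : ℤ) + 1) * n) = ((List.range (m + 1)).map fun i => a i ^ h i).prod := by
    rw [List.range_succ, List.map_append, List.prod_append]
    simp only [List.map_cons, List.map_nil, List.prod_cons, List.prod_nil]
    have hhm : h m = ((m : ℤ) + 1) * n := by simp [hh]
    rw [hhm, mul_one]
    have : ((List.range m).map fun i => a i ^ h i) = (List.range m).map fun _ => (1 : G) := by
      apply List.map_congr_left
      intro i hi
      have hi2 : i < m := List.mem_range.mp hi
      have : h i = 0 := by simp only [hh]; rw [if_neg (by omega)]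
      simp [this]
    rw [this]
    simp
  -- combine
  have key : ((List.range (m + 1)).map (fun i => a i ^ n)).prod =
      ⁅A, r⁆ * a m ^ (((m : ℤ) + 1) * n) := by
    have hcomb : ⁅A, r⁆ * a m ^ (((m : ℤ) + 1) * n) =
        ((List.range (m + 1)).map fun i => a i ^ (f i + g i + h i)).prod := by
      rw [commutatorElement_def]
      rw [show A * r * A⁻¹ * r⁻¹ * a m ^ (((m : ℤ) + 1) * n)
          = A * (r * A⁻¹ * r⁻¹) * a m ^ (((m : ℤ) + 1) * n) by group]
      rw [hAg, hAh, hAf, aux_prod_mul a _ hc f g, aux_prod_mul a _ hc _ h]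
    rw [hcomb]
    apply congrArg List.prod
    apply List.map_congr_left
    intro i hi
    have hi' : i < m + 1 := List.mem_range.mp hi
    congr 1
    simp only [hf, hg, hh]
    by_cases h0 : i = 0
    · subst h0
      by_cases hm0 : m = 0
      · subst hm0
        rw [if_neg (by omega), if_pos rfl, if_pos rfl]
        push_cast; ring
      · rw [if_pos (by omega), if_pos rfl, if_neg (by omega)]
        push_cast; ring
    · by_cases hm : i = m
      · subst hm
        rw [if_neg (by omega), if_neg h0, if_pos rfl]
        ring
      · have hlt : i < m := by omega
        rw [if_pos hlt, if_neg h0, if_neg hm]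
        ring
  have hcast : ((↑(m + 1) : ℤ)) * n = ((m : ℤ) + 1) * n := by push_cast; ring
  rw [hcast]
  refine ⟨key, A, r, ?_⟩
  rw [key, mul_assoc, ← zpow_add, add_neg_cancel, zpow_zero, mul_one]
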